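/- Let A : ℝ → Matrix (Fin n) (Fin n) ℝ be continuous and periodic of period ω > 0, and let φ be the solution of φ'(s) = A(s) · φ(s) with φ(0) = λ. Then φ is periodic of period ω if and only if ∫₀^ω A(σ) · φ(σ) dσ = 0. -/

import Mathlib

open Matrix Set

/-- Lemma 2.1: the solution of `φ' = A(s)φ`, `φ(0) = λ`, with `A` continuous and ω-periodic,
is periodic of period ω iff `∫₀^ω A(σ) φ(σ) dσ = 0`. -/
theorem stmt_0 {n : ℕ} (ω : ℝ) (hω : 0 < ω)
    (A : ℝ → Matrix (Fin n) (Fin n) ℝ)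
    (hAcont : Continuous fun s => A s)
    (hAper : ∀ s, A (s + ω) = A s)
    (l : Fin n → ℝ) (φ : ℝ → Fin n → ℝ)
    (hφ0 : φ 0 = l)
    (hφ : ∀ s, HasDerivAt φ (A s *ᵥ φ s) s) :
    (∀ s, φ (s + ω) = φ s) ↔ (∫ σ in (0:ℝ)..ω, A σ *ᵥ φ σ) = 0 := by
  -- the linear map sending a matrix to its mulVec CLM
  let L : Matrix (Fin n) (Fin n) ℝ →ₗ[ℝ] ((Fin n → ℝ) →L[ℝ] (Fin n → ℝ)) :=
    (LinearMap.toContinuousLinearMap : ((Fin n → ℝ) →ₗ[ℝ] (Fin n → ℝ)) ≃ₗ[ℝ] _).toLinearMap ∘ₗ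
      (Matrix.toLin' : Matrix (Fin n) (Fin n) ℝ ≃ₗ[ℝ] _).toLinearMap
  have hLapp : ∀ M (x : Fin n → ℝ), L M x = M *ᵥ x := fun M x => by
    simp [L, Matrix.toLin'_apply]
  have hLcont : Continuous L := L.continuous_of_finiteDimensional
  have hφcont : Continuous φ := by
    apply continuous_iff_continuousAt.2
    exact fun s => (hφ s).continuousAt
  have hcont : Continuous fun σ => A σ *ᵥ φ σ := by
    have : Continuous fun σ => L (A σ) (φ σ) := (hLcont.comp hAcont).clm_apply hφcont
    simpa [hLapp] using this
  have key : ∀ a b : ℝ, (∫ σ in a..b, A σ *ᵥ φ σ) = φ b - φ a := fun a b =>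
    intervalIntegral.integral_eq_sub_of_hasDerivAt (fun σ _ => hφ σ)
      (hcont.intervalIntegrable a b)
  constructor
  · intro hper
    have : φ ω = φ 0 := by simpa using hper 0
    rw [key, this, sub_self]
  · intro hint
    have hωeq : φ ω = φ 0 := by
      have := key 0 ω
      rw [hint] at this
      exact (sub_eq_zero.mp this.symm)
    intro s
    -- uniqueness of solutions: ψ t = φ (t + ω) solves the same ODE with same value at 0
    set ψ : ℝ → Fin n → ℝ := fun t => φ (t + ω) with hψdef
    have hψ : ∀ t, HasDerivAt ψ (A t *ᵥ ψ t) t := by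
      intro t
      have h1 : HasDerivAt (fun u : ℝ => u + ω) 1 t := (hasDerivAt_id t).add_const ω
      have := (hφ (t + ω)).scomp t h1
      simp only [hAper, one_smul] at this
      exact this
    have hψ0 : ψ 0 = φ 0 := by simpa [hψdef] using hωeq
    -- work on a compact interval containing 0 and s
    set a : ℝ := -(|s| + 1) with ha
    set b : ℝ := |s| + 1 with hb
    have h0ab : (0 : ℝ) ∈ Ioo a b := by
      constructor
      · rw [ha, hb]; nlinarith [abs_nonneg s]
      · rw [hb]; nlinarith [abs_nonneg s]
    have hsab : s ∈ Icc a b := by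
      constructor
      · simp only [ha]; linarith [neg_abs_le s]
      · simp only [hb]; linarith [le_abs_self s]
    -- Lipschitz bound on the clamped vector field
    obtain ⟨C, hC⟩ := (isCompact_Icc (a := a) (b := b)).exists_bound_of_continuousOn
      ((hLcont.comp hAcont).norm.continuousOn)
    set clamp : ℝ → ℝ := fun t => max a (min t b) with hclamp
    have hclamp_mem : ∀ t, clamp t ∈ Icc a b := by
      intro t
      refine ⟨le_max_left _ _, max_le (h0ab.1.le.trans h0ab.2.le) (min_le_right _ _)⟩
    have hclamp_id : ∀ t ∈ Icc a b, clamp t = t := by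
      intro t ht
      simp [hclamp, max_eq_right_iff.mpr, min_eq_left ht.2, ht.1]
    set v : ℝ → (Fin n → ℝ) → (Fin n → ℝ) := fun t x => A (clamp t) *ᵥ x with hv
    have hvLip : ∀ t, LipschitzOnWith C.toNNReal (v t) univ := by
      intro t
      apply LipschitzWith.lipschitzOnWith
      have h1 : LipschitzWith ‖L (A (clamp t))‖₊ (L (A (clamp t))) :=
        (L (A (clamp t))).lipschitz
      have h2 : ‖L (A (clamp t))‖₊ ≤ C.toNNReal := by
        have := hC _ (hclamp_mem t)
        simp only [Function.comp_apply, norm_norm] at this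
        exact (Real.toNNReal_mono this).trans_eq' norm_toNNReal
      have h3 := h1.weaken h2
      have : ⇑(L (A (clamp t))) = v t := by
        funext x; rw [hLapp]
      rwa [this] at h3
    have huniq : EqOn ψ φ (Icc a b) := by
      apply ODE_solution_unique_of_mem_Icc (fun t _ => hvLip t) h0ab
      · exact fun t _ => (hψ t).continuousAt.continuousWithinAt
      · intro t ht
        have := hψ t
        simpa [hv, hclamp_id t (Ioo_subset_Icc_self ht)] using this
      · exact fun t _ => mem_univ _
      · exact fun t _ => (hφ t).continuousAt.continuousWithinAt
      · intro t ht
        have := hφ t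
        simpa [hv, hclamp_id t (Ioo_subset_Icc_self ht)] using this
      · exact fun t _ => mem_univ _
      · exact hψ0
    exact huniq hsab
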